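/- arXiv:2112.05618 — 2 statements merged into one kernel-verified Lean document; each statement's English description precedes it below -/
import Mathlib

section
/- Let Q_1,...,Q_N be N multilinear homogeneous polynomials over F_q, each of degree k ≤ m in variables x_1,...,x_m and each with not all coefficients zero. If N ≥ 1 + q·(q/(q−1))^{k-1}, then there exist indices 1 ≤ i ≠ j ≤ N such that Q_i and Q_j have a common zero in F_q^m. -/
open Finset

set_option linter.unusedSectionVars false

section Aux
variable {F : Type} [Field F] [Fintype F] [DecidableEq F] {m : ℕ}

def ev (c : Finset (Fin m) → F) (d : ℕ) (y : Fin m → F) : F :=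
  ∑ I ∈ Finset.univ.filter (fun I : Finset (Fin m) => I.card = d), c I * ∏ a ∈ I, y a

lemma ev_update (c : Finset (Fin m) → F) (i₀ : Fin m)
    (hc : ∀ I, i₀ ∈ I → c I = 0) (d : ℕ) (y : Fin m → F) (v : F) :
    ev c d (Function.update y i₀ v) = ev c d y := by
  unfold ev
  refine Finset.sum_congr rfl fun I hI => ?_
  by_cases h : i₀ ∈ I
  · simp [hc I h]
  · congr 1
    refine Finset.prod_congr rfl fun a ha => ?_
    exact Function.update_of_ne (fun e => h (by rw [← e]; exact ha)) _ _

lemma ev_decomp (c : Finset (Fin m) → F) (d : ℕ) (i₀ : Fin m) (y : Fin m → F) :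
    ev c (d + 1) y =
      y i₀ * ev (fun J => if i₀ ∈ J then 0 else c (insert i₀ J)) d y +
      ev (fun I => if i₀ ∈ I then 0 else c I) (d + 1) y := by
  unfold ev
  rw [← Finset.sum_filter_add_sum_filter_not
      (Finset.univ.filter (fun I : Finset (Fin m) => I.card = d + 1)) (fun I => i₀ ∈ I)]
  congr 1
  · rw [Finset.mul_sum]
    rw [show (Finset.univ.filter (fun I : Finset (Fin m) => I.card = d)) =
        (Finset.univ.filter (fun I : Finset (Fin m) => I.card = d)).filter (fun J => i₀ ∈ J)
        ∪ (Finset.univ.filter (fun I : Finset (Fin m) => I.card = d)).filter (fun J => i₀ ∉ J)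
        from (Finset.filter_union_filter_not_eq _ _).symm]
    rw [Finset.sum_union (Finset.disjoint_filter_filter_not _ _ _)]
    have h1 : ∑ J ∈ (Finset.univ.filter (fun I : Finset (Fin m) => I.card = d)).filter
        (fun J => i₀ ∈ J),
        y i₀ * ((if i₀ ∈ J then (0:F) else c (insert i₀ J)) * ∏ a ∈ J, y a) = 0 := by
      refine Finset.sum_eq_zero fun J hJ => ?_
      rw [Finset.mem_filter] at hJ
      simp [hJ.2]
    rw [h1, zero_add]
    refine Finset.sum_nbij' (fun I => I.erase i₀) (fun J => insert i₀ J) ?_ ?_ ?_ ?_ ?_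
    · intro I hI
      simp only [Finset.mem_filter, Finset.mem_univ, true_and] at hI ⊢
      exact ⟨by rw [Finset.card_erase_of_mem hI.2, hI.1]; rfl, Finset.notMem_erase _ _⟩
    · intro J hJ
      simp only [Finset.mem_filter, Finset.mem_univ, true_and] at hJ ⊢
      exact ⟨by rw [Finset.card_insert_of_notMem hJ.2, hJ.1], Finset.mem_insert_self _ _⟩
    · intro I hI
      simp only [Finset.mem_filter] at hI
      exact Finset.insert_erase hI.2
    · intro J hJ
      simp only [Finset.mem_filter, Finset.mem_univ, true_and] at hJ
      exact Finset.erase_insert hJ.2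
    · intro I hI
      simp only [Finset.mem_filter, Finset.mem_univ, true_and] at hI
      show c I * ∏ a ∈ I, y a =
        y i₀ * ((if i₀ ∈ I.erase i₀ then (0:F) else c (insert i₀ (I.erase i₀))) *
          ∏ a ∈ I.erase i₀, y a)
      rw [if_neg (Finset.notMem_erase _ _), Finset.insert_erase hI.2,
        ← Finset.mul_prod_erase _ _ hI.2]
      ring
  · rw [Finset.sum_filter]
    refine Finset.sum_congr rfl fun I _ => ?_
    by_cases h : i₀ ∈ I <;> simp [h]

lemma card_SA (A : Finset (Fin m) → F) (i₀ : Fin m) (hA : ∀ I, i₀ ∈ I → A I = 0) (d : ℕ) :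
    (Finset.univ.filter fun y : Fin m → F => ev A d y ≠ 0).card
      = (Finset.univ.filter fun y : Fin m → F => ev A d y ≠ 0 ∧ y i₀ = 0).card
        * Fintype.card F := by
  have := Finset.card_nbij' (s := Finset.univ.filter fun y : Fin m → F => ev A d y ≠ 0)
    (t := (Finset.univ.filter fun y : Fin m → F => ev A d y ≠ 0 ∧ y i₀ = 0)
      ×ˢ (Finset.univ : Finset F))
    (fun z => (Function.update z i₀ 0, z i₀)) (fun p => Function.update p.1 i₀ p.2)
    (by
      intro z hz
      simp only [Finset.mem_coe, Finset.mem_filter, Finset.mem_univ, true_and] at hz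
      simp only [Finset.mem_coe, Finset.mem_product, Finset.mem_filter, Finset.mem_univ, true_and, and_true]
      exact ⟨by rw [ev_update A i₀ hA]; exact hz, Function.update_self _ _ _⟩)
    (by
      intro p hp
      simp only [Finset.mem_coe, Finset.mem_product, Finset.mem_filter, Finset.mem_univ, true_and,
        and_true] at hp
      simp only [Finset.mem_coe, Finset.mem_filter, Finset.mem_univ, true_and]
      rw [ev_update A i₀ hA]
      exact hp.1)
    (by
      intro z hz
      simp only
      rw [Function.update_idem, Function.update_eq_self])
    (by
      intro p hp
      simp only [Finset.mem_coe, Finset.mem_product, Finset.mem_filter, Finset.mem_univ, true_and,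
        and_true] at hp
      simp only [Function.update_idem, Function.update_self]
      rw [show (0:F) = p.1 i₀ from hp.2.symm, Function.update_eq_self])
  rw [this, Finset.card_product, Finset.card_univ]

lemma fiber_card_ne (a b : F) (ha : a ≠ 0) :
    Fintype.card F - 1 ≤ (Finset.univ.filter fun v : F => v * a + b ≠ 0).card := by
  have hsub : (Finset.univ.filter fun v : F => v * a + b = 0) ⊆ {-b * a⁻¹} := by
    intro v hv
    simp only [Finset.mem_filter, Finset.mem_univ, true_and] at hv
    simp only [Finset.mem_singleton]
    field_simp
    linear_combination hv
  have h1 : (Finset.univ.filter fun v : F => v * a + b = 0).card ≤ 1 :=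
    le_trans (Finset.card_le_card hsub) (by simp)
  have h2 := Finset.card_filter_add_card_filter_not
    (s := (Finset.univ : Finset F)) (p := fun v : F => v * a + b = 0)
  rw [Finset.card_univ] at h2
  have h3 : (Finset.univ.filter fun v : F => ¬ v * a + b = 0)
      = (Finset.univ.filter fun v : F => v * a + b ≠ 0) := rfl
  rw [h3] at h2
  omega

lemma ev_update_affine (c : Finset (Fin m) → F) (d : ℕ) (i₀ : Fin m) (y : Fin m → F) (v : F) :
    ev c (d + 1) (Function.update y i₀ v) =
      v * ev (fun J => if i₀ ∈ J then 0 else c (insert i₀ J)) d y +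
      ev (fun I => if i₀ ∈ I then 0 else c I) (d + 1) y := by
  rw [ev_decomp c d i₀ (Function.update y i₀ v), Function.update_self,
    ev_update _ i₀ (fun I hI => if_pos hI) d,
    ev_update _ i₀ (fun I hI => if_pos hI) (d+1)]

lemma nonzeros_card (d : ℕ) (hd : d ≤ m) (c : Finset (Fin m) → F)
    (hc : ∃ I : Finset (Fin m), I.card = d ∧ c I ≠ 0) :
    Fintype.card F ^ (m - d) * (Fintype.card F - 1) ^ d
      ≤ (Finset.univ.filter fun y : Fin m → F => ev c d y ≠ 0).card := by
  induction d generalizing c with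
  | zero =>
    obtain ⟨I, hI, hne⟩ := hc
    rw [Finset.card_eq_zero] at hI
    subst hI
    have hev : ∀ y : Fin m → F, ev c 0 y = c ∅ := by
      intro y
      unfold ev
      rw [show Finset.univ.filter (fun I : Finset (Fin m) => I.card = 0) = {∅} by
        ext I; simp [Finset.card_eq_zero]]
      simp
    have : (Finset.univ.filter fun y : Fin m → F => ev c 0 y ≠ 0) = Finset.univ := by
      ext y; simp [hev, hne]
    rw [this, Finset.card_univ, Fintype.card_fun]
    simp
  | succ d ih =>
    obtain ⟨I₀, hI₀, hne⟩ := hc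
    have hI₀ne : I₀.Nonempty := Finset.card_pos.mp (by omega)
    obtain ⟨i₀, hi₀⟩ := hI₀ne
    obtain ⟨A, hAdef⟩ : ∃ A' : Finset (Fin m) → F,
        A' = fun J => if i₀ ∈ J then 0 else c (insert i₀ J) := ⟨_, rfl⟩
    obtain ⟨B, hBdef⟩ : ∃ B' : Finset (Fin m) → F,
        B' = fun I => if i₀ ∈ I then 0 else c I := ⟨_, rfl⟩
    have hA0 : ∀ I, i₀ ∈ I → A I = 0 := fun I hI => by rw [hAdef]; exact if_pos hI
    have hAwit : ∃ J : Finset (Fin m), J.card = d ∧ A J ≠ 0 := by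
      refine ⟨I₀.erase i₀, by rw [Finset.card_erase_of_mem hi₀, hI₀]; rfl, ?_⟩
      rw [hAdef]
      simpa [Finset.insert_erase hi₀] using hne
    have hSA := ih (by omega) A hAwit
    obtain ⟨S₀, hS₀def⟩ : ∃ S : Finset (Fin m → F),
        S = Finset.univ.filter fun y : Fin m → F => ev A d y ≠ 0 ∧ y i₀ = 0 := ⟨_, rfl⟩
    rw [card_SA A i₀ hA0 d, ← hS₀def] at hSA
    have hpow : m - d = (m - (d+1)) + 1 := by omega
    have hS₀ : Fintype.card F ^ (m - (d+1)) * (Fintype.card F - 1) ^ d ≤ S₀.card := by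
      refine Nat.le_of_mul_le_mul_right ?_ (Fintype.card_pos (α := F))
      calc Fintype.card F ^ (m - (d+1)) * (Fintype.card F - 1) ^ d * Fintype.card F
          = Fintype.card F ^ (m - d) * (Fintype.card F - 1) ^ d := by
            rw [hpow, pow_succ]; ring
        _ ≤ S₀.card * Fintype.card F := hSA
    obtain ⟨T, hTdef⟩ : ∃ T : Finset (Fin m → F),
        T = Finset.univ.filter fun y : Fin m → F => ev c (d+1) y ≠ 0 := ⟨_, rfl⟩
    have haff : ∀ (y : Fin m → F) (v : F),
        ev c (d+1) (Function.update y i₀ v) = v * ev A d y + ev B (d+1) y := by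
      intro y v
      rw [hAdef, hBdef]
      exact ev_update_affine c d i₀ y v
    have hfib : ∀ y ∈ S₀, Fintype.card F - 1
        ≤ (Finset.univ.filter fun v : F => ev c (d+1) (Function.update y i₀ v) ≠ 0).card := by
      intro y hy
      rw [hS₀def, Finset.mem_filter] at hy
      refine le_trans (fiber_card_ne (ev A d y) (ev B (d+1) y) hy.2.1) (le_of_eq ?_)
      congr 1
      ext v
      simp only [Finset.mem_filter, Finset.mem_univ, true_and]
      rw [haff]
    have hdisjG : (S₀ : Set (Fin m → F)).PairwiseDisjoint
        (fun y => (Finset.univ.filter fun v : F =>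
          ev c (d+1) (Function.update y i₀ v) ≠ 0).image
          (fun v => Function.update y i₀ v)) := by
      intro y₁ hy₁ y₂ hy₂ hne12
      have hy₁' : y₁ ∈ S₀ := Finset.mem_coe.mp hy₁
      have hy₂' : y₂ ∈ S₀ := Finset.mem_coe.mp hy₂
      rw [hS₀def, Finset.mem_filter] at hy₁' hy₂'
      refine Finset.disjoint_left.mpr ?_
      intro z hz1 hz2
      simp only [Finset.mem_image] at hz1 hz2
      obtain ⟨v₁, _, hv1⟩ := hz1
      obtain ⟨v₂, _, hv2⟩ := hz2
      apply hne12
      have heq : Function.update y₁ i₀ (0:F) = Function.update y₂ i₀ 0 := by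
        rw [← hv2] at hv1
        calc Function.update y₁ i₀ (0:F)
            = Function.update (Function.update y₁ i₀ v₁) i₀ 0 := by
              rw [Function.update_idem]
          _ = Function.update (Function.update y₂ i₀ v₂) i₀ 0 := by rw [hv1]
          _ = Function.update y₂ i₀ 0 := by rw [Function.update_idem]
      have e1 : Function.update y₁ i₀ (0:F) = y₁ := by
        rw [show (0:F) = y₁ i₀ from hy₁'.2.2.symm, Function.update_eq_self]
      have e2 : Function.update y₂ i₀ (0:F) = y₂ := by
        rw [show (0:F) = y₂ i₀ from hy₂'.2.2.symm, Function.update_eq_self]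
      rw [e1, e2] at heq
      exact heq
    have hsub : S₀.biUnion (fun y => (Finset.univ.filter fun v : F =>
        ev c (d+1) (Function.update y i₀ v) ≠ 0).image
        (fun v => Function.update y i₀ v)) ⊆ T := by
      intro z hz
      simp only [Finset.mem_biUnion, Finset.mem_image] at hz
      obtain ⟨y, hy, v, hv, rfl⟩ := hz
      simp only [Finset.mem_filter, Finset.mem_univ, true_and] at hv
      rw [hTdef]
      simp only [Finset.mem_filter, Finset.mem_univ, true_and]
      exact hv
    have hcount : S₀.card * (Fintype.card F - 1) ≤ T.card := by
      calc S₀.card * (Fintype.card F - 1) = ∑ _y ∈ S₀, (Fintype.card F - 1) := by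
            rw [Finset.sum_const, smul_eq_mul, mul_comm]
        _ ≤ ∑ y ∈ S₀, ((Finset.univ.filter fun v : F =>
              ev c (d+1) (Function.update y i₀ v) ≠ 0).image
              (fun v => Function.update y i₀ v)).card := by
            refine Finset.sum_le_sum fun y hy => ?_
            rw [Finset.card_image_of_injective _
              (fun v₁ v₂ h => by
                have := congrFun h i₀
                simpa using this)]
            exact hfib y hy
        _ = (S₀.biUnion _).card := (Finset.card_biUnion hdisjG).symm
        _ ≤ T.card := Finset.card_le_card hsub
    rw [← hTdef]
    calc Fintype.card F ^ (m - (d+1)) * (Fintype.card F - 1) ^ (d+1)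
        = (Fintype.card F ^ (m - (d+1)) * (Fintype.card F - 1) ^ d)
          * (Fintype.card F - 1) := by rw [pow_succ, mul_assoc]
      _ ≤ S₀.card * (Fintype.card F - 1) := Nat.mul_le_mul_right _ hS₀
      _ ≤ T.card := hcount

lemma zeros_card (k : ℕ) (hk : 1 ≤ k) (hkm : k ≤ m) (c : Finset (Fin m) → F)
    (hc : ∃ I : Finset (Fin m), I.card = k ∧ c I ≠ 0) :
    Fintype.card F ^ (m - k) * (Fintype.card F - 1) ^ (k - 1)
      ≤ (Finset.univ.filter fun y : Fin m → F => ev c k y = 0).card := by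
  obtain ⟨d, rfl⟩ : ∃ d, k = d + 1 := ⟨k - 1, by omega⟩
  obtain ⟨I₀, hI₀, hne⟩ := hc
  have hI₀ne : I₀.Nonempty := Finset.card_pos.mp (by omega)
  obtain ⟨i₀, hi₀⟩ := hI₀ne
  obtain ⟨A, hAdef⟩ : ∃ A' : Finset (Fin m) → F,
      A' = fun J => if i₀ ∈ J then 0 else c (insert i₀ J) := ⟨_, rfl⟩
  obtain ⟨B, hBdef⟩ : ∃ B' : Finset (Fin m) → F,
      B' = fun I => if i₀ ∈ I then 0 else c I := ⟨_, rfl⟩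
  have hA0 : ∀ I, i₀ ∈ I → A I = 0 := fun I hI => by rw [hAdef]; exact if_pos hI
  have hAwit : ∃ J : Finset (Fin m), J.card = d ∧ A J ≠ 0 := by
    refine ⟨I₀.erase i₀, by rw [Finset.card_erase_of_mem hi₀, hI₀]; rfl, ?_⟩
    rw [hAdef]
    simpa [Finset.insert_erase hi₀] using hne
  have hSA := nonzeros_card d (by omega) A hAwit
  obtain ⟨S₀, hS₀def⟩ : ∃ S : Finset (Fin m → F),
      S = Finset.univ.filter fun y : Fin m → F => ev A d y ≠ 0 ∧ y i₀ = 0 := ⟨_, rfl⟩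
  rw [card_SA A i₀ hA0 d, ← hS₀def] at hSA
  have hpow : m - d = (m - (d+1)) + 1 := by omega
  have hS₀ : Fintype.card F ^ (m - (d+1)) * (Fintype.card F - 1) ^ d ≤ S₀.card := by
    refine Nat.le_of_mul_le_mul_right ?_ (Fintype.card_pos (α := F))
    calc Fintype.card F ^ (m - (d+1)) * (Fintype.card F - 1) ^ d * Fintype.card F
        = Fintype.card F ^ (m - d) * (Fintype.card F - 1) ^ d := by
          rw [hpow, pow_succ]; ring
      _ ≤ S₀.card * Fintype.card F := hSA
  have haff : ∀ (y : Fin m → F) (v : F),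
      ev c (d+1) (Function.update y i₀ v) = v * ev A d y + ev B (d+1) y := by
    intro y v
    rw [hAdef, hBdef]
    exact ev_update_affine c d i₀ y v
  -- injection from S₀ into the zero set
  have hinj : S₀.card ≤ (Finset.univ.filter fun y : Fin m → F => ev c (d+1) y = 0).card := by
    refine Finset.card_le_card_of_injOn
      (fun y => Function.update y i₀ (-(ev B (d+1) y) * (ev A d y)⁻¹)) ?_ ?_
    · intro y hy
      rw [hS₀def, Finset.mem_coe, Finset.mem_filter] at hy
      simp only [Finset.mem_coe, Finset.mem_filter, Finset.mem_univ, true_and]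
      rw [haff, neg_mul, neg_mul, mul_assoc, inv_mul_cancel₀ hy.2.1]
      ring
    · intro y₁ hy₁ y₂ hy₂ heq
      have hy₁' : y₁ ∈ S₀ := Finset.mem_coe.mp hy₁
      have hy₂' : y₂ ∈ S₀ := Finset.mem_coe.mp hy₂
      rw [hS₀def, Finset.mem_filter] at hy₁' hy₂'
      have h0 : Function.update y₁ i₀ (0:F) = Function.update y₂ i₀ 0 := by
        calc Function.update y₁ i₀ (0:F)
            = Function.update (Function.update y₁ i₀
                (-(ev B (d+1) y₁) * (ev A d y₁)⁻¹)) i₀ 0 := by rw [Function.update_idem]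
          _ = Function.update (Function.update y₂ i₀
                (-(ev B (d+1) y₂) * (ev A d y₂)⁻¹)) i₀ 0 := by
                exact congrArg (fun z => Function.update z i₀ 0) heq
          _ = Function.update y₂ i₀ 0 := by rw [Function.update_idem]
      have e1 : Function.update y₁ i₀ (0:F) = y₁ := by
        rw [show (0:F) = y₁ i₀ from hy₁'.2.2.symm, Function.update_eq_self]
      have e2 : Function.update y₂ i₀ (0:F) = y₂ := by
        rw [show (0:F) = y₂ i₀ from hy₂'.2.2.symm, Function.update_eq_self]
      rw [e1, e2] at h0
      exact h0
  have : (d + 1) - 1 = d := by omega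
  rw [this]
  exact le_trans hS₀ hinj

end Aux

/-- Proposition 1: if `Q₁,…,Q_N` are nonzero multilinear homogeneous polynomials
of degree `k ≤ m` over `F_q` and `N ≥ 1 + q·(q/(q−1))^(k−1)`, then some two of
them have a common zero. -/
theorem common_zero_exists (F : Type) [Field F] [Fintype F] [DecidableEq F]
    (q : ℕ) (hq : q = Fintype.card F)
    (m k : ℕ) (hk : 1 ≤ k) (hkm : k ≤ m)
    (N : ℕ) (δ : Fin N → Finset (Fin m) → F)
    (hδ : ∀ t : Fin N, ∃ I : Finset (Fin m), I.card = k ∧ δ t I ≠ 0)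
    (hN : (1 : ℝ) + q * ((q : ℝ) / ((q : ℝ) - 1)) ^ (k - 1) ≤ N) :
    ∃ i j : Fin N, i ≠ j ∧ ∃ y : Fin m → F,
      (∑ I ∈ Finset.univ.filter (fun I : Finset (Fin m) => I.card = k),
          δ i I * ∏ a ∈ I, y a = 0) ∧
      (∑ I ∈ Finset.univ.filter (fun I : Finset (Fin m) => I.card = k),
          δ j I * ∏ a ∈ I, y a = 0) := by
  subst hq
  set q := Fintype.card F with hqdef
  have hq2 : 2 ≤ q := Fintype.one_lt_card
  by_contra hcon
  push_neg at hcon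
  obtain ⟨Z, hZdef⟩ : ∃ Z : Fin N → Finset (Fin m → F),
      Z = fun t => Finset.univ.filter (fun y : Fin m → F => ev (δ t) k y = 0) := ⟨_, rfl⟩
  have hdisj : ∀ i j : Fin N, i ≠ j → Disjoint (Z i) (Z j) := by
    intro i j hij
    refine Finset.disjoint_left.mpr ?_
    intro y hyi hyj
    rw [hZdef] at hyi hyj
    simp only [Finset.mem_filter, Finset.mem_univ, true_and] at hyi hyj
    exact hcon i j hij y hyi hyj
  have hsum : ∑ t : Fin N, (Z t).card ≤ q ^ m := by
    rw [← Finset.card_biUnion (fun i _ j _ hij => hdisj i j hij)]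
    calc (Finset.univ.biUnion Z).card ≤ (Finset.univ : Finset (Fin m → F)).card :=
          Finset.card_le_card (Finset.subset_univ _)
      _ = q ^ m := by rw [Finset.card_univ]; simp [Fintype.card_fun, hqdef]
  have hNL : N * (q ^ (m - k) * (q - 1) ^ (k - 1)) ≤ q ^ m := by
    calc N * (q ^ (m - k) * (q - 1) ^ (k - 1))
        = ∑ _t : Fin N, (q ^ (m - k) * (q - 1) ^ (k - 1)) := by
          rw [Finset.sum_const, Finset.card_univ, Fintype.card_fin, smul_eq_mul]
      _ ≤ ∑ t : Fin N, (Z t).card := by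
          refine Finset.sum_le_sum fun t _ => ?_
          rw [hZdef]
          exact zeros_card k hk hkm (δ t) (hδ t)
      _ ≤ q ^ m := hsum
  -- move to the reals
  have hq1 : (1:ℕ) ≤ q := by omega
  have hR : (N:ℝ) * ((q:ℝ) ^ (m - k) * ((q:ℝ) - 1) ^ (k - 1)) ≤ (q:ℝ) ^ m := by
    have := hNL
    have hcast : ((q - 1 : ℕ) : ℝ) = (q:ℝ) - 1 := by
      push_cast [Nat.cast_sub hq1]; ring
    exact_mod_cast hNL
  have hq1R : (1:ℝ) < (q:ℝ) := by exact_mod_cast hq2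
  have hposq1 : (0:ℝ) < (q:ℝ) - 1 := by linarith
  have hP : (0:ℝ) < ((q:ℝ) - 1) ^ (k - 1) := pow_pos hposq1 _
  have hqm : (q:ℝ) ^ m = (q:ℝ) ^ (m - k) * (q:ℝ) ^ k := by
    rw [← pow_add]; congr 1; omega
  have hpmk : (0:ℝ) < (q:ℝ) ^ (m - k) := pow_pos (by linarith) _
  have h2 : (N:ℝ) * ((q:ℝ) - 1) ^ (k - 1) ≤ (q:ℝ) ^ k := by
    have hR' : ((N:ℝ) * ((q:ℝ) - 1) ^ (k - 1)) * (q:ℝ) ^ (m - k)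
        ≤ (q:ℝ) ^ k * (q:ℝ) ^ (m - k) := by
      calc ((N:ℝ) * ((q:ℝ) - 1) ^ (k - 1)) * (q:ℝ) ^ (m - k)
          = (N:ℝ) * ((q:ℝ) ^ (m - k) * ((q:ℝ) - 1) ^ (k - 1)) := by ring
        _ ≤ (q:ℝ) ^ m := hR
        _ = (q:ℝ) ^ k * (q:ℝ) ^ (m - k) := by rw [hqm]; ring
    exact le_of_mul_le_mul_right hR' hpmk
  have hX : ((q:ℝ) * ((q:ℝ) / ((q:ℝ) - 1)) ^ (k - 1)) * (((q:ℝ) - 1) ^ (k - 1))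
      = (q:ℝ) ^ k := by
    rw [div_pow]
    have hkk : (q:ℝ) ^ k = (q:ℝ) * (q:ℝ) ^ (k - 1) := by
      rw [← pow_succ']; congr 1; omega
    field_simp
    rw [hkk]
    all_goals ring
  have h3 : ((1:ℝ) + (q:ℝ) * ((q:ℝ) / ((q:ℝ) - 1)) ^ (k - 1)) * (((q:ℝ) - 1) ^ (k - 1))
      ≤ (N:ℝ) * (((q:ℝ) - 1) ^ (k - 1)) := mul_le_mul_of_nonneg_right hN hP.le
  have h4 : ((1:ℝ) + (q:ℝ) * ((q:ℝ) / ((q:ℝ) - 1)) ^ (k - 1)) * (((q:ℝ) - 1) ^ (k - 1))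
      = (((q:ℝ) - 1) ^ (k - 1)) + (q:ℝ) ^ k := by
    rw [← hX]; ring
  linarith
end

section
/- Let Q be a nonzero multilinear homogeneous polynomial of degree k in m variables over F_q with zero set Z ⊆ F_q^m. Then the number of non-zeros of Q satisfies q^m − #Z ≥ q^{m-k}·(q−1)^k. -/
open Finset

section Aux

variable {F : Type} [Field F] [Fintype F] [DecidableEq F]

private def emb (n : ℕ) : Fin n ↪ Fin (n + 1) :=
  ⟨Fin.castSucc, Fin.castSucc_injective n⟩

private lemma last_not_mem_map {n : ℕ} (J : Finset (Fin n)) :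
    Fin.last n ∉ J.map (emb n) := by
  simp only [mem_map, emb, Function.Embedding.coeFn_mk]
  rintro ⟨j, -, hj⟩
  exact absurd hj (Fin.castSucc_lt_last j).ne

private lemma map_preimage_of_not_last {n : ℕ} (I : Finset (Fin (n + 1)))
    (h : Fin.last n ∉ I) :
    (I.preimage Fin.castSucc ((Fin.castSucc_injective n).injOn)).map (emb n) = I := by
  ext x
  simp only [mem_map, mem_preimage, emb, Function.Embedding.coeFn_mk]
  constructor
  · rintro ⟨j, hj, rfl⟩; exact hj
  · intro hx
    have hxne : x ≠ Fin.last n := fun hxl => h (hxl ▸ hx)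
    obtain ⟨j, rfl⟩ := Fin.eq_castSucc_of_ne_last hxne
    exact ⟨j, hx, rfl⟩

private lemma image_not_last (n k : ℕ) :
    (univ.filter fun I : Finset (Fin (n + 1)) => I.card = k ∧ Fin.last n ∉ I)
      = ((univ.filter fun J : Finset (Fin n) => J.card = k).image
          (fun J => J.map (emb n))) := by
  ext I
  simp only [mem_filter, mem_image, mem_univ, true_and]
  constructor
  · rintro ⟨hcard, hlast⟩
    refine ⟨I.preimage Fin.castSucc ((Fin.castSucc_injective n).injOn), ?_, ?_⟩
    · rw [← Finset.card_map (emb n), map_preimage_of_not_last I hlast]; exact hcard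
    · exact map_preimage_of_not_last I hlast
  · rintro ⟨J, hJ, rfl⟩
    exact ⟨by rw [Finset.card_map]; exact hJ, last_not_mem_map J⟩

private lemma image_mem_last (n k' : ℕ) :
    (univ.filter fun I : Finset (Fin (n + 1)) => I.card = k' + 1 ∧ Fin.last n ∈ I)
      = ((univ.filter fun J : Finset (Fin n) => J.card = k').image
          (fun J => insert (Fin.last n) (J.map (emb n)))) := by
  ext I
  simp only [mem_filter, mem_image, mem_univ, true_and]
  constructor
  · rintro ⟨hcard, hlast⟩
    have herase : Fin.last n ∉ I.erase (Fin.last n) := Finset.notMem_erase _ _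
    refine ⟨(I.erase (Fin.last n)).preimage Fin.castSucc
      ((Fin.castSucc_injective n).injOn), ?_, ?_⟩
    · rw [← Finset.card_map (emb n), map_preimage_of_not_last _ herase,
        Finset.card_erase_of_mem hlast, hcard]
      omega
    · rw [map_preimage_of_not_last _ herase, Finset.insert_erase hlast]
  · rintro ⟨J, hJ, rfl⟩
    refine ⟨?_, Finset.mem_insert_self _ _⟩
    rw [Finset.card_insert_of_notMem (last_not_mem_map J), Finset.card_map, hJ]

private lemma decomp (n k' : ℕ) (δ : Finset (Fin (n + 1)) → F) (g : Fin n → F) (t : F) :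
    (∑ I ∈ univ.filter fun I : Finset (Fin (n + 1)) => I.card = k' + 1,
        δ I * ∏ i ∈ I, Fin.snoc g t i)
      = t * (∑ J ∈ univ.filter fun J : Finset (Fin n) => J.card = k',
            δ (insert (Fin.last n) (J.map (emb n))) * ∏ j ∈ J, g j)
        + ∑ J ∈ univ.filter fun J : Finset (Fin n) => J.card = k' + 1,
            δ (J.map (emb n)) * ∏ j ∈ J, g j := by
  rw [← Finset.sum_filter_add_sum_filter_not
    (univ.filter fun I : Finset (Fin (n + 1)) => I.card = k' + 1)
    (fun I => Fin.last n ∈ I)]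
  congr 1
  · rw [Finset.filter_filter, image_mem_last n k', Finset.sum_image ?_, Finset.mul_sum]
    · apply Finset.sum_congr rfl
      intro J _
      rw [Finset.prod_insert (last_not_mem_map J), Fin.snoc_last, Finset.prod_map]
      simp only [emb, Function.Embedding.coeFn_mk, Fin.snoc_castSucc]
      ring
    · intro J₁ _ J₂ _ h
      have h2 : J₁.map (emb n) = J₂.map (emb n) := by
        have := congrArg (fun s => Finset.erase s (Fin.last n)) h
        simpa [Finset.erase_insert (last_not_mem_map J₁),
          Finset.erase_insert (last_not_mem_map J₂)] using this
      exact Finset.map_injective (emb n) h2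
  · rw [Finset.filter_filter, image_not_last n (k' + 1), Finset.sum_image ?_]
    · apply Finset.sum_congr rfl
      intro J _
      rw [Finset.prod_map]
      simp only [emb, Function.Embedding.coeFn_mk, Fin.snoc_castSucc]
    · intro J₁ _ J₂ _ h
      exact Finset.map_injective (emb n) h

private lemma key_zero (n : ℕ) (δ : Finset (Fin n) → F) (h : δ ∅ ≠ 0) :
    Fintype.card F ^ n
      ≤ (univ.filter fun y : Fin n → F =>
          ∑ I ∈ univ.filter (fun I : Finset (Fin n) => I.card = 0),
            δ I * ∏ i ∈ I, y i ≠ 0).card := by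
  have hfil : (univ.filter fun I : Finset (Fin n) => I.card = 0) = {∅} := by
    ext I; simp [Finset.card_eq_zero]
  have : (univ.filter fun y : Fin n → F =>
      ∑ I ∈ univ.filter (fun I : Finset (Fin n) => I.card = 0),
        δ I * ∏ i ∈ I, y i ≠ 0) = univ := by
    apply Finset.filter_true_of_mem
    intro y _
    rw [hfil, Finset.sum_singleton, Finset.prod_empty, mul_one]
    exact h
  rw [this, Finset.card_univ, Fintype.card_fun]
  simp

private lemma key : ∀ (n k : ℕ), k ≤ n → ∀ δ : Finset (Fin n) → F,
    (∃ I, I.card = k ∧ δ I ≠ 0) →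
    Fintype.card F ^ (n - k) * (Fintype.card F - 1) ^ k
      ≤ (univ.filter fun y : Fin n → F =>
          ∑ I ∈ univ.filter (fun I : Finset (Fin n) => I.card = k),
            δ I * ∏ i ∈ I, y i ≠ 0).card := by
  intro n
  induction n with
  | zero =>
    intro k hk δ ⟨I, hIcard, hI⟩
    interval_cases k
    have : I = ∅ := Finset.card_eq_zero.mp hIcard
    subst this
    simpa using key_zero 0 δ hI
  | succ n IH =>
    intro k hk δ ⟨I₀, hI₀card, hI₀⟩
    rcases k with _ | k'
    · have : I₀ = ∅ := Finset.card_eq_zero.mp hI₀card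
      subst this
      simpa using key_zero (n + 1) δ hI₀
    -- k = k' + 1 ≥ 1
    set q := Fintype.card F with hq
    clear_value q
    set A : Finset (Fin n) → F := fun J => δ (insert (Fin.last n) (J.map (emb n))) with hA
    set B : Finset (Fin n) → F := fun J => δ (J.map (emb n)) with hB
    set fA : (Fin n → F) → F := fun g =>
      ∑ J ∈ univ.filter (fun J : Finset (Fin n) => J.card = k'), A J * ∏ j ∈ J, g j with hfA
    set fB : (Fin n → F) → F := fun g =>
      ∑ J ∈ univ.filter (fun J : Finset (Fin n) => J.card = k' + 1), B J * ∏ j ∈ J, g j with hfB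
    have hdec : ∀ (g : Fin n → F) (t : F),
        ((∑ I ∈ univ.filter (fun I : Finset (Fin (n + 1)) => I.card = k' + 1),
          δ I * ∏ i ∈ I, Fin.snoc g t i ≠ 0) ↔ t * fA g + fB g ≠ 0) := by
      intro g t
      simp only [hfA, hfB, hA, hB]
      rw [decomp n k' δ g t]
    -- fiberwise count
    have hfiber : (univ.filter (fun y : Fin (n + 1) → F =>
          ∑ I ∈ univ.filter (fun I : Finset (Fin (n + 1)) => I.card = k' + 1),
            δ I * ∏ i ∈ I, y i ≠ 0)).card
        = ∑ g : Fin n → F, (univ.filter fun t : F => t * fA g + fB g ≠ 0).card := by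
      rw [Finset.card_eq_sum_card_fiberwise (f := fun y => Fin.init y) (t := univ)
        (fun _ _ => mem_univ _)]
      apply Finset.sum_congr rfl
      intro g _
      rw [Finset.filter_filter]
      apply Finset.card_nbij' (fun y => y (Fin.last n)) (fun t => Fin.snoc g t)
      · intro y hy
        simp only [mem_coe, mem_filter, mem_univ, true_and] at hy ⊢
        obtain ⟨hy1, hy2⟩ := hy
        have hsnoc : Fin.snoc g (y (Fin.last n)) = y := by
          rw [← hy2]; exact Fin.snoc_init_self y
        exact (hdec g (y (Fin.last n))).mp (by rw [hsnoc]; exact hy1)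
      · intro t ht
        simp only [mem_coe, mem_filter, mem_univ, true_and] at ht ⊢
        exact ⟨(hdec g t).mpr ht, by simp⟩
      · intro y hy
        simp only [mem_coe, mem_filter, mem_univ, true_and] at hy
        rw [← hy.2]; exact Fin.snoc_init_self y
      · intro t _
        simp
    by_cases hcase : ∃ J : Finset (Fin n), J.card = k' ∧ A J ≠ 0
    · -- case 1: leading coefficient poly nonzero
      have hk' : k' ≤ n := Nat.lt_succ_iff.mp (Nat.lt_of_lt_of_le (Nat.lt_succ_self k') hk)
      have hIH := IH k' hk' A hcase
      set G := univ.filter fun g : Fin n → F => fA g ≠ 0 with hG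
      have hcg : ∀ g ∈ G, q - 1 ≤ (univ.filter fun t : F => t * fA g + fB g ≠ 0).card := by
        intro g hg
        simp only [hG, mem_filter, mem_univ, true_and] at hg
        have hzero : (univ.filter fun t : F => t * fA g + fB g = 0) = {-fB g * (fA g)⁻¹} := by
          ext t
          simp only [mem_filter, mem_univ, true_and, mem_singleton]
          constructor
          · intro h
            field_simp
            linear_combination h
          · intro h
            subst h
            field_simp
            ring
        have hsplit := Finset.card_filter_add_card_filter_not
          (s := (univ : Finset F)) (fun t : F => t * fA g + fB g = 0)
        rw [hzero, Finset.card_singleton, Finset.card_univ, ← hq] at hsplit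
        rw [← hsplit, Nat.add_sub_cancel_left]
      calc q ^ (n + 1 - (k' + 1)) * (q - 1) ^ (k' + 1)
          = (q ^ (n - k') * (q - 1) ^ k') * (q - 1) := by
            rw [Nat.succ_sub_succ]; ring
        _ ≤ G.card * (q - 1) := Nat.mul_le_mul_right _ hIH
        _ = ∑ _g ∈ G, (q - 1) := by rw [Finset.sum_const, smul_eq_mul]
        _ ≤ ∑ g ∈ G, (univ.filter fun t : F => t * fA g + fB g ≠ 0).card :=
            Finset.sum_le_sum hcg
        _ ≤ ∑ g : Fin n → F, (univ.filter fun t : F => t * fA g + fB g ≠ 0).card :=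
            Finset.sum_le_sum_of_subset (Finset.filter_subset _ _)
        _ = _ := hfiber.symm
    · -- case 2: A ≡ 0
      push_neg at hcase
      have hfA0 : ∀ g : Fin n → F, fA g = 0 := by
        intro g
        simp only [hfA]
        apply Finset.sum_eq_zero
        intro J hJ
        simp only [mem_filter, mem_univ, true_and] at hJ
        rw [hcase J hJ, zero_mul]
      -- last ∉ I₀, else contradiction
      have hlast : Fin.last n ∉ I₀ := by
        intro hmem
        set J₀ := (I₀.erase (Fin.last n)).preimage Fin.castSucc
          ((Fin.castSucc_injective n).injOn) with hJ₀
        have hmapJ₀ : J₀.map (emb n) = I₀.erase (Fin.last n) :=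
          map_preimage_of_not_last _ (Finset.notMem_erase _ _)
        have hJ₀card : J₀.card = k' := by
          rw [← Finset.card_map (emb n), hmapJ₀, Finset.card_erase_of_mem hmem, hI₀card]
          simp
        have : A J₀ = δ I₀ := by
          simp only [hA]
          rw [hmapJ₀, Finset.insert_erase hmem]
        exact hI₀ (this ▸ hcase J₀ hJ₀card)
      set J₀ := I₀.preimage Fin.castSucc ((Fin.castSucc_injective n).injOn) with hJ₀
      have hmapJ₀ : J₀.map (emb n) = I₀ := map_preimage_of_not_last _ hlast
      have hJ₀card : J₀.card = k' + 1 := by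
        rw [← Finset.card_map (emb n), hmapJ₀, hI₀card]
      have hkn : k' + 1 ≤ n := by
        have := Finset.card_le_card (Finset.subset_univ J₀)
        rw [hJ₀card, Finset.card_univ, Fintype.card_fin] at this
        exact this
      have hBne : B J₀ ≠ 0 := by
        simp only [hB]
        rw [hmapJ₀]; exact hI₀
      have hIH := IH (k' + 1) hkn B ⟨J₀, hJ₀card, hBne⟩
      set G := univ.filter fun g : Fin n → F => fB g ≠ 0 with hG
      have hcg : ∀ g ∈ G, (univ.filter fun t : F => t * fA g + fB g ≠ 0).card = q := by
        intro g hg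
        simp only [hG, mem_filter, mem_univ, true_and] at hg
        have : (univ.filter fun t : F => t * fA g + fB g ≠ 0) = univ := by
          apply Finset.filter_true_of_mem
          intro t _
          rw [hfA0 g, mul_zero, zero_add]
          exact hg
        rw [this, Finset.card_univ, ← hq]
      calc q ^ (n + 1 - (k' + 1)) * (q - 1) ^ (k' + 1)
          = q * (q ^ (n - (k' + 1)) * (q - 1) ^ (k' + 1)) := by
            have h1 : n - k' = (n - (k' + 1)) + 1 := by
              clear * - hkn
              omega
            rw [Nat.succ_sub_succ, h1, pow_succ]
            ring
        _ ≤ q * G.card := Nat.mul_le_mul_left _ hIH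
        _ = ∑ _g ∈ G, q := by rw [Finset.sum_const, smul_eq_mul, mul_comm]
        _ = ∑ g ∈ G, (univ.filter fun t : F => t * fA g + fB g ≠ 0).card :=
            (Finset.sum_congr rfl hcg).symm
        _ ≤ ∑ g : Fin n → F, (univ.filter fun t : F => t * fA g + fB g ≠ 0).card :=
            Finset.sum_le_sum_of_subset (Finset.filter_subset _ _)
        _ = _ := hfiber.symm

end Aux

/-- The number of non-zeros of a nonzero multilinear homogeneous polynomial of
degree `k ≤ m` over `F_q` satisfies `q^m − #Z ≥ q^(m−k)·(q−1)^k`. -/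
theorem nonzero_count_lower (F : Type) [Field F] [Fintype F] [DecidableEq F]
    (q : ℕ) (hq : q = Fintype.card F)
    (m k : ℕ) (hk : 1 ≤ k) (hkm : k ≤ m)
    (δ : Finset (Fin m) → F)
    (hδ : ∃ I : Finset (Fin m), I.card = k ∧ δ I ≠ 0) :
    q ^ (m - k) * (q - 1) ^ k
      ≤ q ^ m - (Finset.univ.filter (fun y : Fin m → F =>
          ∑ I ∈ Finset.univ.filter (fun I : Finset (Fin m) => I.card = k),
            δ I * ∏ i ∈ I, y i = 0)).card := by
  subst hq
  have hsplit := Finset.card_filter_add_card_filter_not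
    (s := (univ : Finset (Fin m → F))) (fun y : Fin m → F =>
      ∑ I ∈ Finset.univ.filter (fun I : Finset (Fin m) => I.card = k),
        δ I * ∏ i ∈ I, y i = 0)
  rw [Finset.card_univ, Fintype.card_fun, Fintype.card_fin] at hsplit
  have hkey := key m k hkm δ hδ
  rw [← hsplit, Nat.add_sub_cancel_left]
  exact hkey
end
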